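/- Let L be the Laplacian of a connected weighted graph on n vertices with all weights in [1,U], satisfying L† ⪯ 2n⁴U²·I and b_e b_eᵀ ⪯ L for each edge e. Let z be a vector with ‖z‖² ≤ n, and y a vector with ‖y - L†z‖_L ≤ δ‖L†z‖_L for some 0 < δ < 1, where ‖x‖_L = √(xᵀLx). Then for any edge e, |yᵀb_e b_eᵀ y - zᵀ L† b_e b_eᵀ L† z| ≤ 6δn⁵U². -/

import Mathlib

open Matrix

theorem stmt_17 (n : ℕ) (hn : 0 < n) (U : ℝ) (hU : 1 ≤ U)
    (w : Fin n → Fin n → ℝ)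
    (hw_symm : ∀ u v, w u v = w v u)
    (hw_range : ∀ u v, w u v = 0 ∨ (1 ≤ w u v ∧ w u v ≤ U))
    (hw_diag : ∀ u, w u u = 0)
    (L Ldag : Matrix (Fin n) (Fin n) ℝ)
    (hL : L = Matrix.of fun u v => if u = v then ∑ x, w u x else -w u v)
    -- connectedness: the kernel of L is spanned by the all-ones vector
    (hconn : ∀ x : Fin n → ℝ, L *ᵥ x = 0 → ∃ c : ℝ, ∀ i, x i = c)
    -- Ldag is the Moore–Penrose pseudoinverse of L
    (hMP1 : L * Ldag * L = L) (hMP2 : Ldag * L * Ldag = Ldag)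
    (hMP3 : (L * Ldag)ᵀ = L * Ldag) (hMP4 : (Ldag * L)ᵀ = Ldag * L)
    -- L† ⪯ 2n⁴U²·I
    (hLdagBound : ((2 * (n : ℝ) ^ 4 * U ^ 2) • (1 : Matrix (Fin n) (Fin n) ℝ) -
      Ldag).PosSemidef)
    -- the vectors z and y
    (z y : Fin n → ℝ) (δ : ℝ) (hδ0 : 0 < δ) (hδ1 : δ < 1)
    (hz : (∑ i, (z i) ^ 2) ≤ (n : ℝ))
    (hy : Real.sqrt ((y - Ldag *ᵥ z) ⬝ᵥ (L *ᵥ (y - Ldag *ᵥ z))) ≤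
      δ * Real.sqrt ((Ldag *ᵥ z) ⬝ᵥ (L *ᵥ (Ldag *ᵥ z))))
    -- e is an edge with incidence vector b_e = e_u - e_v, and b_e b_eᵀ ⪯ L
    (u v : Fin n) (huv : u ≠ v) (hedge : w u v ≠ 0)
    (b : Fin n → ℝ)
    (hb : b = fun i => (if i = u then (1 : ℝ) else 0) - (if i = v then 1 else 0))
    (hbL : (L - vecMulVec b b).PosSemidef) :
    |y ⬝ᵥ (vecMulVec b b *ᵥ y) - z ⬝ᵥ ((Ldag * vecMulVec b b * Ldag) *ᵥ z)| ≤
      6 * δ * (n : ℝ) ^ 5 * U ^ 2 := by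
  -- L is symmetric
  have hLsym : Lᵀ = L := by
    subst hL
    ext i j
    by_cases h : i = j
    · subst h; simp
    · simp [transpose_apply, Matrix.of_apply, h, Ne.symm h, hw_symm i j]
  -- Ldag is symmetric (uniqueness of Moore-Penrose pseudoinverse)
  have hDsym : Ldagᵀ = Ldag := by
    set X := Ldag with hX
    set Y := Ldagᵀ with hY
    have hYt : Yᵀ = X := by rw [hY, transpose_transpose]
    have h1 : L * Y * L = L := by
      have h := congrArg Matrix.transpose hMP1
      rw [transpose_mul, transpose_mul, hLsym] at h
      rw [← Matrix.mul_assoc] at h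
      exact h
    have h2 : Y * L * Y = Y := by
      have h := congrArg Matrix.transpose hMP2
      rw [transpose_mul, transpose_mul, hLsym] at h
      rw [← Matrix.mul_assoc] at h
      exact h
    have hLY : L * Y = X * L := by
      have h := congrArg Matrix.transpose hMP4
      rw [transpose_transpose] at h
      rw [h, transpose_mul, hLsym]
    have hYL : Y * L = L * X := by
      have h := congrArg Matrix.transpose hMP3
      rw [transpose_transpose] at h
      rw [h, transpose_mul, hLsym]
    have hQsym : (L * Y)ᵀ = L * Y := by
      rw [transpose_mul, hYt, hLsym, ← hLY]
    have hQsym' : (Y * L)ᵀ = Y * L := by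
      rw [transpose_mul, hYt, hLsym, ← hYL]
    have hQP : (L * Y) * (L * X) = L * X := by
      rw [show (L * Y) * (L * X) = (L * Y * L) * X by simp [Matrix.mul_assoc], h1]
    have hPQ : (L * X) * (L * Y) = L * Y := by
      rw [show (L * X) * (L * Y) = (L * X * L) * Y by simp [Matrix.mul_assoc], hMP1]
    have hAeq : L * Y = L * X := by
      have h := congrArg Matrix.transpose hQP
      rw [transpose_mul, hMP3, hQsym, hPQ] at h
      exact h
    have hQP' : (X * L) * (Y * L) = X * L := by
      rw [show (X * L) * (Y * L) = X * (L * Y * L) by simp [Matrix.mul_assoc], h1]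
    have hPQ' : (Y * L) * (X * L) = Y * L := by
      rw [show (Y * L) * (X * L) = Y * (L * X * L) by simp [Matrix.mul_assoc], hMP1]
    have hBeq : X * L = Y * L := by
      have h := congrArg Matrix.transpose hPQ'
      rw [transpose_mul, hMP4, hQsym', hQP'] at h
      exact h
    calc Y = Y * L * Y := h2.symm
      _ = X * L * Y := by rw [← hBeq]
      _ = X * (L * Y) := by rw [Matrix.mul_assoc]
      _ = X * (L * X) := by rw [hAeq]
      _ = X * L * X := by rw [Matrix.mul_assoc]
      _ = X := hMP2
  -- basic computations with vecMulVec
  have key : ∀ c : Fin n → ℝ, vecMulVec b b *ᵥ c = (b ⬝ᵥ c) • b := by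
    intro c; ext i
    simp only [vecMulVec, mulVec, dotProduct, Matrix.of_apply, Pi.smul_apply, smul_eq_mul,
      Finset.sum_mul]
    exact Finset.sum_congr rfl (fun j _ => by ring)
  have quad : ∀ a c : Fin n → ℝ, a ⬝ᵥ (vecMulVec b b *ᵥ c) = (b ⬝ᵥ a) * (b ⬝ᵥ c) := by
    intro a c
    rw [key, dotProduct_smul, smul_eq_mul, dotProduct_comm a b]
    ring
  -- move symmetric matrices across dot products
  have moveL : ∀ a c : Fin n → ℝ, a ⬝ᵥ (L *ᵥ c) = (L *ᵥ a) ⬝ᵥ c := by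
    intro a c
    rw [dotProduct_mulVec, ← mulVec_transpose, hLsym]
  have moveD : ∀ a c : Fin n → ℝ, a ⬝ᵥ (Ldag *ᵥ c) = (Ldag *ᵥ a) ⬝ᵥ c := by
    intro a c
    rw [dotProduct_mulVec, ← mulVec_transpose, hDsym]
  set x : Fin n → ℝ := Ldag *ᵥ z with hx
  set d : Fin n → ℝ := y - x with hd
  set α : ℝ := d ⬝ᵥ (L *ᵥ d) with hα
  set β : ℝ := x ⬝ᵥ (L *ᵥ x) with hβ
  -- bound on quadratic form of b bᵀ by L
  have hbbL : ∀ t : Fin n → ℝ, (b ⬝ᵥ t) ^ 2 ≤ t ⬝ᵥ (L *ᵥ t) := by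
    intro t
    have h0 := hbL.dotProduct_mulVec_nonneg t
    rw [star_trivial, sub_mulVec, dotProduct_sub, quad t t] at h0
    nlinarith [sq_nonneg (b ⬝ᵥ t)]
  have hα0 : 0 ≤ α := le_trans (sq_nonneg _) (hbbL d)
  have hβ0 : 0 ≤ β := le_trans (sq_nonneg _) (hbbL x)
  -- β = zᵀ L† z
  have hβz : β = z ⬝ᵥ (Ldag *ᵥ z) := by
    calc β = (Ldag *ᵥ z) ⬝ᵥ (L *ᵥ (Ldag *ᵥ z)) := by rw [hβ, hx]
      _ = z ⬝ᵥ (Ldag *ᵥ (L *ᵥ (Ldag *ᵥ z))) := (moveD _ _).symm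
      _ = z ⬝ᵥ ((Ldag * L * Ldag) *ᵥ z) := by
          rw [mulVec_mulVec, mulVec_mulVec, Matrix.mul_assoc]
      _ = z ⬝ᵥ (Ldag *ᵥ z) := by rw [hMP2]
  -- β ≤ 2 n^5 U^2
  have hβbound : β ≤ 2 * (n : ℝ) ^ 5 * U ^ 2 := by
    have h0 := hLdagBound.dotProduct_mulVec_nonneg z
    rw [star_trivial, sub_mulVec, dotProduct_sub, smul_mulVec, one_mulVec,
      dotProduct_smul] at h0
    have hzz : z ⬝ᵥ z = ∑ i, (z i) ^ 2 := by simp [dotProduct, sq]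
    have hn4 : (0:ℝ) ≤ 2 * (n : ℝ) ^ 4 * U ^ 2 := by positivity
    have hmul := mul_le_mul_of_nonneg_left (le_trans (le_of_eq hzz) hz) hn4
    simp only [smul_eq_mul] at h0
    rw [hβz]
    nlinarith
  -- rewrite the target
  set p : ℝ := b ⬝ᵥ y with hp
  set q : ℝ := b ⬝ᵥ x with hq
  have hLHS : y ⬝ᵥ (vecMulVec b b *ᵥ y) = p ^ 2 := by rw [quad]; ring
  have hRHS : z ⬝ᵥ ((Ldag * vecMulVec b b * Ldag) *ᵥ z) = q ^ 2 := by
    calc z ⬝ᵥ ((Ldag * vecMulVec b b * Ldag) *ᵥ z)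
        = z ⬝ᵥ (Ldag *ᵥ (vecMulVec b b *ᵥ (Ldag *ᵥ z))) := by
          rw [mulVec_mulVec, mulVec_mulVec]
      _ = (Ldag *ᵥ z) ⬝ᵥ (vecMulVec b b *ᵥ (Ldag *ᵥ z)) := moveD _ _
      _ = (b ⬝ᵥ x) * (b ⬝ᵥ x) := by rw [← hx, quad]
      _ = q ^ 2 := by rw [← hq]; ring
  rw [hLHS, hRHS]
  -- bound |p - q| and |q|
  have hpq : p - q = b ⬝ᵥ d := by rw [hd, dotProduct_sub, hp, hq]
  set s : ℝ := Real.sqrt β with hs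
  have hs0 : 0 ≤ s := Real.sqrt_nonneg _
  have hs2 : s ^ 2 = β := Real.sq_sqrt hβ0
  have h1 : |p - q| ≤ Real.sqrt α := by
    rw [hpq]
    have h := Real.sqrt_le_sqrt (hbbL d)
    rwa [Real.sqrt_sq_eq_abs] at h
  have h4 : |p - q| ≤ δ * s := le_trans h1 hy
  have h5 : |q| ≤ s := by
    have h := Real.sqrt_le_sqrt (hbbL x)
    rwa [Real.sqrt_sq_eq_abs] at h
  have h6 : (p - q) ^ 2 ≤ (δ * s) ^ 2 := by
    rw [← sq_abs]
    exact pow_le_pow_left₀ (abs_nonneg _) h4 2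
  have h7 : |2 * q * (p - q)| ≤ 2 * s * (δ * s) := by
    rw [abs_mul, abs_mul, abs_two]
    nlinarith [abs_nonneg q, abs_nonneg (p - q)]
  have final : |p ^ 2 - q ^ 2| ≤ (δ * s) ^ 2 + 2 * s * (δ * s) := by
    have e : p ^ 2 - q ^ 2 = (p - q) ^ 2 + 2 * q * (p - q) := by ring
    rw [e]
    refine (abs_add_le _ _).trans ?_
    rw [abs_of_nonneg (sq_nonneg (p - q))]
    linarith
  have h8 : (δ * s) ^ 2 + 2 * s * (δ * s) ≤ 3 * δ * s ^ 2 := by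
    nlinarith [mul_nonneg (mul_nonneg hδ0.le (sub_nonneg.2 hδ1.le)) (sq_nonneg s)]
  have h9 : 3 * δ * s ^ 2 ≤ 3 * δ * (2 * (n : ℝ) ^ 5 * U ^ 2) := by
    have := mul_le_mul_of_nonneg_left (hs2 ▸ hβbound) (by positivity : (0:ℝ) ≤ 3 * δ)
    linarith
  have h10 : 3 * δ * (2 * (n : ℝ) ^ 5 * U ^ 2) = 6 * δ * (n : ℝ) ^ 5 * U ^ 2 := by ring
  linarith
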